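/- Given a k-extended Langford sequence (s_1, …, s_a) of order a and defect b, the set of triples T_i = {0, s_i + a + b − 1, s_i + i + a + 2(b−1)} for 1 ≤ i ≤ a has multiset of differences equal to ±([b, 3a+b] \ {k + a + b − 1}) in the integers. -/

import Mathlib

def tripleDiffs {G : Type*} [AddCommGroup G] [DecidableEq G] (T : Finset G) : Multiset G :=
  ((T ×ˢ T).filter (fun p => p.1 ≠ p.2)).val.map (fun p => p.1 - p.2)

lemma tripleDiffs_zero (u v : ℤ) (hu : u ≠ 0) (hv : v ≠ 0) (huv : u ≠ v) :
    tripleDiffs ({0, u, v} : Finset ℤ) =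
      (u - v) ::ₘ (-v) ::ₘ (-u) ::ₘ (v - u) ::ₘ u ::ₘ {v} := by
  have h0u : (0:ℤ) ≠ u := fun h => hu h.symm
  have h0v : (0:ℤ) ≠ v := fun h => hv h.symm
  have h : ({0,u,v} : Finset ℤ).val = 0 ::ₘ u ::ₘ {v} := by
    simp [Finset.insert_val, Multiset.ndinsert_of_notMem, h0u, h0v, huv]
  unfold tripleDiffs
  rw [Finset.filter_val, Finset.product_val, h]
  simp [Multiset.product, Multiset.filter_singleton, hu, hv, huv, hu.symm, hv.symm,
    huv.symm, h0u, h0v]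

theorem stmt_8 (a b k : ℕ) (hb : 1 ≤ b) (hk : 1 ≤ k) (hk2 : k ≤ 2 * a + 1)
    (s : ℕ → ℤ)
    (hLangford : ((Finset.Icc 1 a).val.map (fun i => s i)) +
        ((Finset.Icc 1 a).val.map (fun i => s i + i + b - 1)) =
      ((Finset.Icc (1 : ℤ) (2 * a + 1)).erase (k : ℤ)).val) :
    ((Finset.Icc 1 a).val.bind (fun i =>
        tripleDiffs ({0, s i + a + b - 1, s i + i + a + 2 * (b - 1)} : Finset ℤ))) =
      ((Finset.Icc (b : ℤ) (3 * a + b)).erase ((k : ℤ) + a + b - 1)).val +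
      ((Finset.Icc (b : ℤ) (3 * a + b)).erase ((k : ℤ) + a + b - 1)).val.map (fun x => -x) := by
  classical
  -- bound on s i
  have hmem : ∀ i ∈ (Finset.Icc 1 a).val, 1 ≤ s i ∧ 1 ≤ i := by
    intro i hi
    have h1 : s i ∈ ((Finset.Icc (1:ℤ) (2*a+1)).erase (k:ℤ)).val := by
      rw [← hLangford]
      exact Multiset.mem_add.2 (Or.inl (Multiset.mem_map_of_mem _ hi))
    have h2 : s i ∈ (Finset.Icc (1:ℤ) (2*a+1)).erase (k:ℤ) := h1
    have h3 := Finset.mem_of_mem_erase h2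
    rw [Finset.mem_Icc] at h3
    have h4 : 1 ≤ i := (Finset.mem_Icc.1 (Finset.mem_val.mp hi)).1
    exact ⟨h3.1, h4⟩
  -- rewrite the bind body
  have hbind : ((Finset.Icc 1 a).val.bind (fun i =>
        tripleDiffs ({0, s i + a + b - 1, s i + i + a + 2 * (b - 1)} : Finset ℤ))) =
      (Finset.Icc 1 a).val.bind (fun i =>
        ((s i + a + b - 1) - (s i + i + a + 2 * (b - 1))) ::ₘ
        (-(s i + i + a + 2 * (b - 1))) ::ₘ (-(s i + a + b - 1)) ::ₘ
        ((s i + i + a + 2 * (b - 1)) - (s i + a + b - 1)) ::ₘ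
        (s i + a + b - 1) ::ₘ {s i + i + a + 2 * (b - 1)}) := by
    refine Multiset.bind_congr (fun i hi => ?_)
    obtain ⟨h1, h2⟩ := hmem i hi
    refine tripleDiffs_zero _ _ (by push_cast; omega) (by push_cast; omega) (by push_cast; omega)
  rw [hbind]
  simp only [Multiset.bind_cons, Multiset.bind_singleton]
  -- key splits
  set K : ℤ := (k:ℤ) + a + b - 1 with hKdef
  have hsplit : (Finset.Icc (b:ℤ) (3*a+b)) =
      (Finset.Icc (b:ℤ) ((a:ℤ)+b-1)).disjUnion (Finset.Icc ((a:ℤ)+b) (3*a+b))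
        (by rw [Finset.disjoint_left]; intro x hx hx'; simp only [Finset.mem_Icc] at hx hx'; omega) := by
    ext x
    simp only [Finset.mem_disjUnion, Finset.mem_Icc]
    omega
  have hKmem : K ∈ (Finset.Icc ((a:ℤ)+b) (3*a+b)).val := by
    rw [Finset.mem_val, Finset.mem_Icc]; omega
  have hEval : ((Finset.Icc (b:ℤ) (3*a+b)).erase K).val
      = (Finset.Icc (b:ℤ) ((a:ℤ)+b-1)).val + ((Finset.Icc ((a:ℤ)+b) (3*a+b)).erase K).val := by
    rw [Finset.erase_val, hsplit]
    show ((Finset.Icc (b:ℤ) ((a:ℤ)+b-1)).val + (Finset.Icc ((a:ℤ)+b) (3*a+b)).val).erase K = _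
    rw [Multiset.erase_add_right_pos _ hKmem, Finset.erase_val]
  -- Icc b (a+b-1) as a map of Icc 1 a
  have hIw : (Finset.Icc 1 a).val.map (fun i : ℕ => (i:ℤ) + b - 1)
      = (Finset.Icc (b:ℤ) ((a:ℤ)+b-1)).val := by
    have h : (Finset.Icc 1 a).map ⟨fun i : ℕ => (i:ℤ) + b - 1, fun x y h => by
          simp only at h; omega⟩
        = Finset.Icc (b:ℤ) ((a:ℤ)+b-1) := by
      ext x
      simp only [Finset.mem_map, Finset.mem_Icc, Function.Embedding.coeFn_mk]
      constructor
      · rintro ⟨i, ⟨h1, h2⟩, rfl⟩; show (b:ℤ) ≤ (i:ℤ) + b - 1 ∧ (i:ℤ) + b - 1 ≤ (a:ℤ)+b-1; omega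
      · intro hx; exact ⟨(x - b + 1).toNat, by omega, by show (((x - b + 1).toNat : ℕ) : ℤ) + b - 1 = x; omega⟩
    rw [← h, Finset.map_val]
    rfl
  -- the shifted erased interval as a map of D
  have hDmap : (((Finset.Icc (1:ℤ) (2*a+1)).erase (k:ℤ)).val).map (fun x => x + ((a:ℤ)+b-1))
      = ((Finset.Icc ((a:ℤ)+b) (3*a+b)).erase K).val := by
    rw [Finset.erase_val, Finset.erase_val,
      Multiset.map_erase _ (fun x y h => by simpa using h) _ _]
    have h1 : (Finset.Icc (1:ℤ) (2*a+1)).val.map (fun x => x + ((a:ℤ)+b-1))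
        = (Finset.Icc ((1:ℤ)+((a:ℤ)+b-1)) ((2*a+1)+((a:ℤ)+b-1))).val := by
      rw [← Finset.map_add_right_Icc, Finset.map_val]
      rfl
    rw [h1]
    congr 1
    · congr 1 <;> ring
    · rw [hKdef]; ring
  have hE : ((Finset.Icc (b:ℤ) (3*a+b)).erase K).val
      = (Finset.Icc 1 a).val.map (fun i : ℕ => (i:ℤ) + b - 1)
      + (Finset.Icc 1 a).val.map (fun i => s i + a + b - 1)
      + (Finset.Icc 1 a).val.map (fun i => s i + i + a + 2 * (b - 1)) := by
    have e1 : (Finset.Icc 1 a).val.map ((fun x => x + ((a:ℤ)+b-1)) ∘ (fun i => s i))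
        = (Finset.Icc 1 a).val.map (fun i => s i + a + b - 1) :=
      Multiset.map_congr rfl (fun i _ => by simp only [Function.comp]; ring)
    have e2 : (Finset.Icc 1 a).val.map ((fun x => x + ((a:ℤ)+b-1)) ∘ (fun i => s i + i + b - 1))
        = (Finset.Icc 1 a).val.map (fun i => s i + i + a + 2 * (b - 1)) :=
      Multiset.map_congr rfl (fun i _ => by simp only [Function.comp]; ring)
    rw [hEval, hIw, ← hDmap, ← hLangford, Multiset.map_add, Multiset.map_map, Multiset.map_map,
      e1, e2, add_assoc]
  rw [hE]
  have e3 : (Finset.Icc 1 a).val.map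
        (fun i => (s i + (a:ℤ) + b - 1) - (s i + i + a + 2 * (b - 1)))
      = (Finset.Icc 1 a).val.map (fun i : ℕ => -((i:ℤ) + b - 1)) :=
    Multiset.map_congr rfl (fun i _ => by ring)
  have e4 : (Finset.Icc 1 a).val.map
        (fun i => (s i + (i:ℤ) + a + 2 * (b - 1)) - (s i + a + b - 1))
      = (Finset.Icc 1 a).val.map (fun i : ℕ => (i:ℤ) + b - 1) :=
    Multiset.map_congr rfl (fun i _ => by ring)
  rw [e3, e4]
  simp only [Multiset.map_add, Multiset.map_map, Function.comp]
  simp only [add_assoc]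
  ac_rfl
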